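/- Let p ≥ 1, let D ⊆ ℝ^p be a nonempty compact set, let γ > 0, let (μ_k)_{k≥1} be a sequence in D, and let (H_k)_{k≥1}, (E_k)_{k≥1} be sequences of functions D → ℝ satisfying, for all k ≥ 1: (a) 0 ≤ E_k(μ) ≤ H_k(μ) for all μ ∈ D; (b) H_{k+1}(μ) ≤ H_k(μ) for all μ ∈ D; (c) H_k(μ_i) = 0 for all 1 ≤ i ≤ k; (d) H_k(ν) ≤ H_k(μ_{k+1}) for all ν ∈ D; (e) |H_k(μ) − H_k(ν)| ≤ γ‖μ − ν‖ for all μ, ν ∈ D (the same γ for every k). Then lim_{k→∞} H_k(μ_{k+1}) = 0, lim_{k→∞} E_k(μ_{k+1}) = 0, and the actual error decays to zero uniformly: for every ε > 0 there exists K such that E_k(μ) ≤ ε for all k ≥ K and all μ ∈ D. -/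
import Mathlib


/-- Theorem 4.2 of the paper (abstract form): on a nonempty compact set `D ⊆ ℝ^p`, if the
surrogate errors `H_k` dominate the actual errors `E_k ≥ 0`, decrease monotonically in `k`,
vanish at the sampled points, are maximized at the next sample point, and are uniformly Lipschitz
with constant `γ`, then `H_k(μ_{k+1}) → 0`, `E_k(μ_{k+1}) → 0`, and the actual error decays to
zero uniformly on `D`. -/
theorem greedy_subspace_framework_converges
    (p : ℕ) (hp : 1 ≤ p)
    (D : Set (EuclideanSpace ℝ (Fin p))) (hDc : IsCompact D) (hDne : D.Nonempty)
    (γ : ℝ) (hγ : 0 < γ)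
    (μ : ℕ → EuclideanSpace ℝ (Fin p)) (hμ : ∀ k, 1 ≤ k → μ k ∈ D)
    (H E : ℕ → EuclideanSpace ℝ (Fin p) → ℝ)
    (ha : ∀ k, 1 ≤ k → ∀ x ∈ D, 0 ≤ E k x ∧ E k x ≤ H k x)
    (hb : ∀ k, 1 ≤ k → ∀ x ∈ D, H (k + 1) x ≤ H k x)
    (hc : ∀ k, 1 ≤ k → ∀ i, 1 ≤ i → i ≤ k → H k (μ i) = 0)
    (hd : ∀ k, 1 ≤ k → ∀ x ∈ D, H k x ≤ H k (μ (k + 1)))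
    (he : ∀ k, 1 ≤ k → ∀ x ∈ D, ∀ y ∈ D, |H k x - H k y| ≤ γ * ‖x - y‖) :
    Filter.Tendsto (fun k => H k (μ (k + 1))) Filter.atTop (nhds 0) ∧
    Filter.Tendsto (fun k => E k (μ (k + 1))) Filter.atTop (nhds 0) ∧
    ∀ ε : ℝ, 0 < ε → ∃ K : ℕ, ∀ k, K ≤ k → ∀ x ∈ D, E k x ≤ ε := by
  have hμD : ∀ n : ℕ, μ (n + 1) ∈ D := fun n => hμ (n + 1) (Nat.le_add_left 1 n)
  -- the shifted surrogate errors at the greedy points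
  set b : ℕ → ℝ := fun k => H (k + 1) (μ (k + 2)) with hbdef
  have hb0 : ∀ k, 0 ≤ b k := fun k => le_trans (ha (k + 1) (Nat.le_add_left 1 k) _ (hμD (k + 1))).1
    (ha (k + 1) (Nat.le_add_left 1 k) _ (hμD (k + 1))).2
  have hanti : Antitone b := by
    apply antitone_nat_of_succ_le
    intro k
    calc H (k + 2) (μ (k + 3)) ≤ H (k + 1) (μ (k + 3)) :=
          hb (k + 1) (Nat.le_add_left 1 k) _ (hμD (k + 2))
      _ ≤ H (k + 1) (μ (k + 2)) := hd (k + 1) (Nat.le_add_left 1 k) _ (hμD (k + 2))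
  have hbdd : BddBelow (Set.range b) := ⟨0, by rintro _ ⟨k, rfl⟩; exact hb0 k⟩
  set L : ℝ := ⨅ k, b k with hLdef
  have hLtend : Filter.Tendsto b Filter.atTop (nhds L) := tendsto_atTop_ciInf hanti hbdd
  have hLle : ∀ k, L ≤ b k := fun k => ciInf_le hbdd k
  have hL0 : 0 ≤ L := le_ciInf hb0
  -- L = 0 by a separation/compactness argument
  have hLzero : L = 0 := by
    by_contra hne
    have hLpos : 0 < L := lt_of_le_of_ne hL0 (Ne.symm hne)
    obtain ⟨x, hx, φ, hφ, hconv⟩ := hDc.tendsto_subseq (x := fun n => μ (n + 1)) hμD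
    have hcauchy := hconv.cauchySeq
    obtain ⟨N, hN⟩ := Metric.cauchySeq_iff.mp hcauchy (L / γ) (div_pos hLpos hγ)
    have hdist : dist (μ (φ (N + 1) + 1)) (μ (φ N + 1)) < L / γ :=
      hN (N + 1) (Nat.le_succ N) N le_rfl
    set k := φ (N + 1) with hk
    have hk1 : 1 ≤ k := le_trans (Nat.le_add_left 1 N) (hφ.le_apply)
    have hik : φ N + 1 ≤ k := hφ (Nat.lt_succ_self N)
    have hzero : H k (μ (φ N + 1)) = 0 :=
      hc k hk1 (φ N + 1) (Nat.le_add_left 1 _) hik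
    have hlip := he k hk1 (μ (k + 1)) (hμD k) (μ (φ N + 1)) (hμD (φ N))
    rw [hzero, sub_zero] at hlip
    have hHk : H k (μ (k + 1)) < L := by
      calc H k (μ (k + 1)) ≤ |H k (μ (k + 1))| := le_abs_self _
        _ ≤ γ * ‖μ (k + 1) - μ (φ N + 1)‖ := hlip
        _ = γ * dist (μ (k + 1)) (μ (φ N + 1)) := by rw [dist_eq_norm]
        _ < γ * (L / γ) := by
            exact mul_lt_mul_of_pos_left hdist hγ
        _ = L := by field_simp
    have e1 : k - 1 + 1 = k := by omega
    have e2 : k - 1 + 2 = k + 1 := by omega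
    have hLlek := hLle (k - 1)
    simp only [hbdef, e1, e2] at hLlek
    exact absurd hHk (not_lt.mpr hLlek)
  rw [hLzero] at hLtend
  have h1 : Filter.Tendsto (fun k => H k (μ (k + 1))) Filter.atTop (nhds 0) := by
    have : Filter.Tendsto (fun k : ℕ => H (k + 1) (μ (k + 1 + 1))) Filter.atTop (nhds 0) := hLtend
    exact (Filter.tendsto_add_atTop_iff_nat 1).mp this
  have h2 : Filter.Tendsto (fun k => E k (μ (k + 1))) Filter.atTop (nhds 0) := by
    apply tendsto_of_tendsto_of_tendsto_of_le_of_le' tendsto_const_nhds h1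
    · filter_upwards [Filter.eventually_ge_atTop 1] with k hk
      exact (ha k hk _ (hμD k)).1
    · filter_upwards [Filter.eventually_ge_atTop 1] with k hk
      exact (ha k hk _ (hμD k)).2
  refine ⟨h1, h2, fun ε hε => ?_⟩
  obtain ⟨K, hK⟩ := Metric.tendsto_atTop.mp h1 ε hε
  refine ⟨max K 1, fun k hk x hx => ?_⟩
  have hk1 : 1 ≤ k := le_trans (le_max_right K 1) hk
  have hkK : K ≤ k := le_trans (le_max_left K 1) hk
  have h := hK k hkK
  rw [Real.dist_eq, sub_zero] at h
  calc E k x ≤ H k x := (ha k hk1 x hx).2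
    _ ≤ H k (μ (k + 1)) := hd k hk1 x hx
    _ ≤ |H k (μ (k + 1))| := le_abs_self _
    _ ≤ ε := le_of_lt h
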